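/- Let y¹, y² be step functions on [0,T] taking constant values y_{j,i} on intervals [t_{i−1}, t_i) of a common partition 0 = t₀ < … < t_n = T, and let Y^j_k = max_{1≤i≤k} y_{j,i} be the partial maxima. Then for any p ≥ 1, sup over partitions of Σ_k |(Y¹_{i_k} − Y¹_{i_{k−1}}) − (Y²_{i_k} − Y²_{i_{k−1}})|^p is bounded by sup over partitions of Σ_k |(y_{1,l_k} − y_{1,l_{k−1}}) − (y_{2,l_k} − y_{2,l_{k−1}})|^p, i.e. v_p(running max of y¹ − running max of y²) ≤ v_p(y¹ − y²). -/

import Mathlib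

open Set Filter Function MeasureTheory

noncomputable section

abbrev Eu (d : ℕ) := EuclideanSpace ℝ (Fin d)

def varSums {E : Type*} [NormedAddCommGroup E] (p : ℝ) (x : ℝ → E) (a b : ℝ) : Set ℝ :=
  {v | ∃ (n : ℕ) (t : Fin (n + 1) → ℝ), Monotone t ∧ t 0 = a ∧ t (Fin.last n) = b ∧
    v = ∑ i : Fin n, ‖x (t i.succ) - x (t i.castSucc)‖ ^ p}

/-- p-variation `v_p(x)_{[a,b]}` (supremum over partitions of `[a,b]`). -/
def vpvar {E : Type*} [NormedAddCommGroup E] (p : ℝ) (x : ℝ → E) (a b : ℝ) : ℝ :=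
  sSup (varSums p x a b)

/-- `x` has finite p-variation on `[a,b]`. -/
def HasFinVar {E : Type*} [NormedAddCommGroup E] (p : ℝ) (x : ℝ → E) (a b : ℝ) : Prop :=
  BddAbove (varSums p x a b)

/-- `V_p(x)_{[a,b]} = (v_p(x)_{[a,b]})^{1/p}`. -/
def Vp {E : Type*} [NormedAddCommGroup E] (p : ℝ) (x : ℝ → E) (a b : ℝ) : ℝ :=
  vpvar p x a b ^ (1 / p)

/-- p-variation norm `V̄_p(x)_{[a,b]} = V_p(x)_{[a,b]} + ‖x a‖`. -/
def VpNorm {E : Type*} [NormedAddCommGroup E] (p : ℝ) (x : ℝ → E) (a b : ℝ) : ℝ :=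
  Vp p x a b + ‖x a‖

/-- càdlàg : right-continuous with left limits. -/
def Cadlag {E : Type*} [NormedAddCommGroup E] (x : ℝ → E) : Prop :=
  (∀ t : ℝ, ContinuousWithinAt x (Ici t) t) ∧
  ∀ t : ℝ, ∃ c : E, Tendsto x (nhdsWithin t (Iio t)) (nhds c)
/-- running supremum of `y` on `[0,t]`. -/
def runSup (y : ℝ → ℝ) (t : ℝ) : ℝ := sSup (y '' Icc 0 t)

namespace VpAux

noncomputable def psum (p : ℝ) {α : Type*} (f : α → ℝ) : List α → ℝ
  | a :: l@(b :: _) => |f b - f a| ^ p + psum p f l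
  | _ => 0

variable {α : Type*} {p : ℝ}

@[simp] lemma psum_nil (f : α → ℝ) : psum p f [] = 0 := by simp [psum]
@[simp] lemma psum_single (f : α → ℝ) (a : α) : psum p f [a] = 0 := by simp [psum]
@[simp] lemma psum_cons₂ (f : α → ℝ) (a b : α) (L : List α) :
    psum p f (a :: b :: L) = |f b - f a| ^ p + psum p f (b :: L) := by rw [psum]

lemma psum_nonneg (f : α → ℝ) : ∀ L : List α, 0 ≤ psum p f L
  | [] => by simp
  | [a] => by simp
  | a :: b :: L => by
    simp only [psum_cons₂]
    exact add_nonneg (Real.rpow_nonneg (abs_nonneg _) _) (psum_nonneg f (b :: L))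

lemma psum_congr_head (f : α → ℝ) {a a' : α} (h : f a = f a') (L : List α) :
    psum p f (a :: L) = psum p f (a' :: L) := by
  cases L with
  | nil => simp
  | cons b L => simp [h]

lemma psum_neg (f : α → ℝ) : ∀ L : List α, psum p (fun i => -(f i)) L = psum p f L
  | [] => by simp
  | [a] => by simp
  | a :: b :: L => by
    simp only [psum_cons₂, psum_neg f (b :: L)]
    congr 1
    rw [show -f b - -f a = -(f b - f a) by ring, abs_neg]

lemma psum_le_cons (f : α → ℝ) (a : α) (L : List α) : psum p f L ≤ psum p f (a :: L) := by
  cases L with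
  | nil => simp
  | cons b L =>
    simp only [psum_cons₂]
    nlinarith [Real.rpow_nonneg (abs_nonneg (f b - f a)) p]

lemma psum_le_concat (f : α → ℝ) (c : α) : ∀ L : List α, psum p f L ≤ psum p f (L ++ [c])
  | [] => by simp
  | [a] => by
    simp only [List.cons_append, List.nil_append, psum_single, psum_cons₂, psum_nil]
    nlinarith [Real.rpow_nonneg (abs_nonneg (f c - f a)) p]
  | a :: b :: L => by
    simp only [List.cons_append, psum_cons₂]
    have := psum_le_concat f c (b :: L)
    simp only [List.cons_append] at this
    linarith

lemma psum_map {β : Type*} (f : α → ℝ) (g : β → α) :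
    ∀ L : List β, psum p f (L.map g) = psum p (fun i => f (g i)) L
  | [] => by simp
  | [a] => by simp
  | a :: b :: L => by
    have := psum_map f g (b :: L)
    simp only [List.map_cons] at *
    simp only [psum_cons₂, this]

lemma psum_ofFn (f : α → ℝ) : ∀ (m : ℕ) (v : Fin (m + 1) → α),
    psum p f (List.ofFn v) = ∑ i : Fin m, |f (v i.succ) - f (v i.castSucc)| ^ p
  | 0, v => by simp [List.ofFn_succ]
  | m + 1, v => by
    have ih := psum_ofFn f m (fun i => v i.succ)
    simp only [List.ofFn_succ] at ih ⊢
    simp only [psum_cons₂] at ih ⊢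
    rw [ih, Fin.sum_univ_succ]
    simp

noncomputable def firstSign {α : Type*} (M : α → ℝ) : List α → ℝ
  | c :: l@(c' :: _) => if M c' = M c then firstSign M l else M c' - M c
  | _ => 0

@[simp] lemma firstSign_nil (M : α → ℝ) : firstSign M [] = 0 := by simp [firstSign]
@[simp] lemma firstSign_single (M : α → ℝ) (a : α) : firstSign M [a] = 0 := by simp [firstSign]
lemma firstSign_cons₂ (M : α → ℝ) (c c' : α) (L : List α) :
    firstSign M (c :: c' :: L) =
      if M c' = M c then firstSign M (c' :: L) else M c' - M c := by rw [firstSign]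

lemma firstSign_neg (M : α → ℝ) : ∀ L : List α, firstSign M L = - firstSign (fun i => -(M i)) L
  | [] => by simp
  | [a] => by simp
  | c :: c' :: L => by
    rw [firstSign_cons₂, firstSign_cons₂]
    by_cases h : M c' = M c
    · rw [if_pos h, if_pos (by rw [h]), firstSign_neg M (c' :: L)]
    · rw [if_neg h, if_neg (fun h' : -M c' = -M c => h (by linarith [neg_inj.mp h']))]
      ring

noncomputable def runMax {n : ℕ} (a : Fin n → ℝ) (i : Fin n) : ℝ :=
  (Finset.Iic i).sup' ⟨i, Finset.mem_Iic.2 le_rfl⟩ a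

lemma le_runMax {n : ℕ} (a : Fin n → ℝ) {j i : Fin n} (h : j ≤ i) : a j ≤ runMax a i :=
  Finset.le_sup' a (Finset.mem_Iic.2 h)

lemma runMax_mono {n : ℕ} (a : Fin n → ℝ) {i j : Fin n} (h : i ≤ j) :
    runMax a i ≤ runMax a j :=
  Finset.sup'_mono a (Finset.Iic_subset_Iic.2 h) _

lemma exists_runMax_eq {n : ℕ} (a : Fin n → ℝ) (i : Fin n) :
    ∃ j, j ≤ i ∧ a j = runMax a i := by
  obtain ⟨j, hj, hje⟩ := Finset.exists_mem_eq_sup' (⟨i, Finset.mem_Iic.2 le_rfl⟩ :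
    (Finset.Iic i).Nonempty) a
  exact ⟨j, Finset.mem_Iic.1 hj, hje.symm⟩

lemma rpow_superadd {a b : ℝ} (ha : 0 ≤ a) (hb : 0 ≤ b) (hp : 1 ≤ p) :
    a ^ p + b ^ p ≤ (a + b) ^ p := by
  have h := NNReal.add_rpow_le_rpow_add a.toNNReal b.toNNReal hp
  have h' := NNReal.coe_le_coe.2 h
  rw [NNReal.coe_add, NNReal.coe_rpow, NNReal.coe_rpow, NNReal.coe_rpow, NNReal.coe_add,
    Real.coe_toNNReal _ ha, Real.coe_toNNReal _ hb] at h'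
  exact h'

end VpAux

namespace VpAux2
open VpAux

variable {p : ℝ}

lemma emit_pos {n : ℕ} (a b : Fin n → ℝ) {c c' e : Fin n} (hcc : c ≤ c') (hec : e ≤ c)
    (hxe : a e - b e ≤ runMax a c - runMax b c)
    (hD : runMax a c - runMax b c < runMax a c' - runMax b c') :
    ∃ m, c < m ∧ m ≤ c' ∧ runMax a c' - runMax b c' ≤ a m - b m ∧
      (runMax a c' - runMax b c') - (runMax a c - runMax b c) ≤ (a m - b m) - (a e - b e) := by
  have hB := runMax_mono b hcc
  have hA : runMax a c < runMax a c' := by linarith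
  obtain ⟨m, hm, hma⟩ := exists_runMax_eq a c'
  have hcm : c < m := by
    by_contra h
    push_neg at h
    have := le_runMax a h
    linarith
  have hbm : b m ≤ runMax b c' := le_runMax b hm
  exact ⟨m, hcm, hm, by linarith, by linarith⟩

lemma core (hp : 1 ≤ p) (N : ℕ) :
    ∀ {n : ℕ} (a b : Fin n → ℝ) (c e : Fin n) (L : List (Fin n)),
    L.length ≤ N → (c :: L).Chain' (· ≤ ·) → e ≤ c →
    a e - b e ≤ runMax a c - runMax b c →
    0 ≤ firstSign (fun i => runMax a i - runMax b i) (c :: L) →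
    ∃ K : List (Fin n), (e :: K).Chain' (· ≤ ·) ∧
      psum p (fun i => runMax a i - runMax b i) (c :: L) ≤
        psum p (fun i => a i - b i) (e :: K) := by
  have hp0 : (0:ℝ) ≤ p := by linarith
  have hpne : p ≠ 0 := by linarith
  induction N with
  | zero =>
    intro n a b c e L hlen _ _ _ _
    have : L = [] := List.eq_nil_of_length_eq_zero (Nat.le_zero.mp hlen)
    subst this
    exact ⟨[], List.isChain_singleton e, by simp⟩
  | succ N IH =>
    intro n a b c e L hlen hchain hec hxe hfs
    set M : Fin n → ℝ := fun i => runMax a i - runMax b i with hM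
    cases L with
    | nil => exact ⟨[], List.isChain_singleton e, by simp⟩
    | cons c' L2 =>
      have hcc' : c ≤ c' := (List.isChain_cons_cons.1 hchain).1
      rcases eq_or_ne (M c') (M c) with hD0 | hD0
      · -- first increment is zero: drop c
        have hfs' : 0 ≤ firstSign M (c' :: L2) := by
          rwa [firstSign_cons₂, if_pos hD0] at hfs
        have hlen2 : L2.length ≤ N := by
          simp only [List.length_cons] at hlen; omega
        obtain ⟨K, hKc, hKs⟩ := IH a b c' e L2 hlen2 hchain.tail
          (hec.trans hcc') (le_of_le_of_eq hxe hD0.symm) hfs'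
        refine ⟨K, hKc, ?_⟩
        rw [psum_cons₂, show M c' - M c = 0 by rw [hD0]; ring, abs_zero,
          Real.zero_rpow hpne, zero_add]
        exact hKs
      · have hfseq : firstSign M (c :: c' :: L2) = M c' - M c := by
          rw [firstSign_cons₂, if_neg hD0]
        have hD1pos : M c < M c' := by
          rw [hfseq] at hfs
          rcases lt_or_eq_of_le (by linarith : M c ≤ M c') with h | h
          · exact h
          · exact absurd h.symm hD0
        obtain ⟨m, hcm, hmc', hMm, hDle⟩ := emit_pos a b hcc' hec hxe hD1pos
        have habs1 : |M c' - M c| ^ p ≤ |(a m - b m) - (a e - b e)| ^ p := by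
          apply Real.rpow_le_rpow (abs_nonneg _) _ hp0
          rw [abs_of_nonneg (by linarith : (0:ℝ) ≤ M c' - M c)]
          exact hDle.trans (le_abs_self _)
        cases L2 with
        | nil =>
          refine ⟨[m], List.isChain_pair.2 (hec.trans hcm.le), ?_⟩
          simp only [psum_cons₂, psum_single]
          linarith
        | cons c'' L3 =>
          have hc'c'' : c' ≤ c'' := (List.isChain_cons_cons.1 hchain.tail).1
          have hlen3 : L3.length + 1 ≤ N := by
            simp only [List.length_cons] at hlen; omega
          rcases le_or_gt (M c') (M c'') with hD2 | hD2
          · -- merge c' away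
            have hch : (c :: c'' :: L3).Chain' (· ≤ ·) :=
              List.isChain_cons_cons.2 ⟨hcc'.trans hc'c'', hchain.tail.tail⟩
            have hfs'' : 0 ≤ firstSign M (c :: c'' :: L3) := by
              rw [firstSign_cons₂, if_neg (by intro h; rw [h] at hD2; linarith)]
              linarith
            obtain ⟨K, hKc, hKs⟩ := IH a b c e (c'' :: L3) hlen3 hch hec hxe hfs''
            refine ⟨K, hKc, ?_⟩
            have key : |M c' - M c| ^ p + |M c'' - M c'| ^ p ≤ |M c'' - M c| ^ p := by
              rw [abs_of_nonneg (by linarith : (0:ℝ) ≤ M c' - M c),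
                abs_of_nonneg (by linarith : (0:ℝ) ≤ M c'' - M c'),
                abs_of_nonneg (by linarith : (0:ℝ) ≤ M c'' - M c),
                show M c'' - M c = (M c' - M c) + (M c'' - M c') by ring]
              exact rpow_superadd (by linarith) (by linarith) hp
            simp only [psum_cons₂] at hKs ⊢
            linarith
          · -- emit pair (e, m), swap roles and recurse
            have hneg : (fun i => runMax b i - runMax a i) = fun i => -(M i) := by
              funext i; simp [hM]
            have hfs3 : 0 ≤ firstSign (fun i => runMax b i - runMax a i) (c' :: c'' :: L3) := by
              rw [hneg]
              have := firstSign_neg M (c' :: c'' :: L3)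
              have hval : firstSign M (c' :: c'' :: L3) = M c'' - M c' := by
                rw [firstSign_cons₂, if_neg (by intro h; rw [h] at hD2; exact lt_irrefl _ hD2)]
              linarith
            have hxm : b m - a m ≤ runMax b c' - runMax a c' := by
              have := hMm; linarith
            obtain ⟨K', hKc', hKs'⟩ := IH b a c' m (c'' :: L3) hlen3 hchain.tail hmc' hxm hfs3
            refine ⟨m :: K', List.isChain_cons_cons.2 ⟨hec.trans hcm.le, hKc'⟩, ?_⟩
            have hswapM : psum p (fun i => runMax b i - runMax a i) (c' :: c'' :: L3) =
                psum p M (c' :: c'' :: L3) := by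
              rw [hneg, psum_neg]
            have hnx : (fun i => b i - a i) = fun i => -(a i - b i) := by funext i; ring
            have hswapx : psum p (fun i => b i - a i) (m :: K') =
                psum p (fun i => a i - b i) (m :: K') := by
              rw [hnx, psum_neg]
            rw [hswapM, hswapx] at hKs'
            have expand1 : psum p M (c :: c' :: c'' :: L3) =
                |M c' - M c| ^ p + psum p M (c' :: c'' :: L3) := psum_cons₂ _ _ _ _
            have expand2 : psum p (fun i => a i - b i) (e :: m :: K') =
                |(a m - b m) - (a e - b e)| ^ p +
                  psum p (fun i => a i - b i) (m :: K') := psum_cons₂ _ _ _ _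
            rw [expand1, expand2]
            linarith

end VpAux2

namespace VpAux3
open VpAux VpAux2

variable {p : ℝ}

lemma disc (hp : 1 ≤ p) {n : ℕ} (a b : Fin n → ℝ) (L : List (Fin n))
    (hL : L.Chain' (· ≤ ·)) :
    ∃ K : List (Fin n), K.Chain' (· ≤ ·) ∧
      psum p (fun i => runMax a i - runMax b i) L ≤ psum p (fun i => a i - b i) K := by
  cases L with
  | nil => exact ⟨[], List.isChain_nil, by simp⟩
  | cons c L' =>
    rcases le_or_gt 0 (firstSign (fun i => runMax a i - runMax b i) (c :: L')) with hfs | hfs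
    · obtain ⟨e, hec, heb⟩ := exists_runMax_eq b c
      have hxe : a e - b e ≤ runMax a c - runMax b c := by
        have := le_runMax a hec; linarith
      obtain ⟨K, h1, h2⟩ := core hp L'.length a b c e L' le_rfl hL hec hxe hfs
      exact ⟨e :: K, h1, h2⟩
    · obtain ⟨e, hec, hea⟩ := exists_runMax_eq a c
      have hxe : b e - a e ≤ runMax b c - runMax a c := by
        have := le_runMax b hec; linarith
      have hneg : (fun i => runMax a i - runMax b i) =
          fun i => -((fun i => runMax b i - runMax a i) i) := by funext i; ring
      have hfs' : 0 ≤ firstSign (fun i => runMax b i - runMax a i) (c :: L') := by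
        have h := firstSign_neg (fun i => runMax b i - runMax a i) (c :: L')
        rw [← hneg] at h
        linarith
      obtain ⟨K, h1, h2⟩ := core hp L'.length b a c e L' le_rfl hL hec hxe hfs'
      refine ⟨e :: K, h1, ?_⟩
      have e1 : psum p (fun i => runMax a i - runMax b i) (c :: L') =
          psum p (fun i => runMax b i - runMax a i) (c :: L') := by
        rw [hneg, psum_neg]
      have e2 : psum p (fun i => a i - b i) (e :: K) =
          psum p (fun i => b i - a i) (e :: K) := by
        rw [show (fun i => a i - b i) = fun i => -((fun i => b i - a i) i) by funext i; ring,
          psum_neg]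
      rw [e1, e2]
      exact h2

lemma chain'_ofFn {m : ℕ} {β : Type*} [Preorder β] (v : Fin (m + 1) → β) (hv : Monotone v) :
    (List.ofFn v).Chain' (· ≤ ·) := by
  show List.IsChain _ _
  rw [List.isChain_iff_getElem]
  intro i h
  simp only [List.getElem_ofFn]
  exact hv (by simp [Fin.le_def])

lemma monotone_get_of_chain' (l : List ℝ) (h : l.Chain' (· ≤ ·))
    {i j : ℕ} (hi : i < l.length) (hj : j < l.length) (hij : i ≤ j) :
    l.get ⟨i, hi⟩ ≤ l.get ⟨j, hj⟩ := by
  rcases Nat.lt_or_ge i j with hlt | hge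
  · exact List.pairwise_iff_get.1 (List.isChain_iff_pairwise.1 h) ⟨i, hi⟩ ⟨j, hj⟩ hlt
  · have : i = j := le_antisymm hij hge
    subst this; exact le_rfl

end VpAux3
namespace VpAux4
open VpAux VpAux2 VpAux3

variable {p : ℝ}

lemma mem_varSums_of_list (x : ℝ → ℝ) (aa bb : ℝ) (Lmid : List ℝ)
    (hch : (aa :: (Lmid ++ [bb])).Chain' (· ≤ ·)) :
    psum p x (aa :: (Lmid ++ [bb])) ∈ varSums p x aa bb := by
  classical
  set l : List ℝ := aa :: (Lmid ++ [bb]) with hl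
  have hlen : l.length = (Lmid.length + 1) + 1 := by simp [hl]
  set m := Lmid.length + 1 with hm
  have hv : ∀ j : Fin (m + 1), (j : ℕ) < l.length := fun j => by rw [hlen]; exact j.isLt
  have hofn : List.ofFn (fun j : Fin (m + 1) => l.get ⟨j, hv j⟩) = l := by
    apply List.ext_get (by simp [hlen, hm])
    intro i h1 h2
    simp only [List.get_eq_getElem, List.getElem_ofFn]
  refine ⟨m, fun j => l.get ⟨j, hv j⟩, ?_, ?_, ?_, ?_⟩
  · intro i j hij
    exact monotone_get_of_chain' l hch _ _ hij
  · rfl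
  · have h1 : l = (aa :: Lmid) ++ [bb] := by simp [hl]
    simp only [List.get_eq_getElem]
    have : ((aa :: Lmid) ++ [bb])[(Fin.last m : ℕ)]'(by rw [← h1]; exact hv _) = bb :=
      List.getElem_concat_length (by simp [hm]) _
    simpa [← h1] using this
  · conv_lhs => rw [← hofn]
    rw [psum_ofFn]
    simp [Real.norm_eq_abs]

end VpAux4
theorem vpvar_runMax_sub_le_of_step (T p : ℝ) (hp : 1 ≤ p)
    (n : ℕ) (hn : 1 ≤ n) (t : Fin (n + 1) → ℝ)
    (hmono : StrictMono t) (h0 : t 0 = 0) (hT : t (Fin.last n) = T)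
    (y1 y2 : ℝ → ℝ)
    (hstep1 : ∀ i : Fin n, ∀ s ∈ Ico (t i.castSucc) (t i.succ), y1 s = y1 (t i.castSucc))
    (hstep2 : ∀ i : Fin n, ∀ s ∈ Ico (t i.castSucc) (t i.succ), y2 s = y2 (t i.castSucc))
    (hlast1 : y1 T = y1 (t ⟨n - 1, by omega⟩))
    (hlast2 : y2 T = y2 (t ⟨n - 1, by omega⟩)) :
    vpvar p (fun u => runSup y1 u - runSup y2 u) 0 T ≤
      vpvar p (fun u => y1 u - y2 u) 0 T := by
  classical
  open VpAux VpAux2 VpAux3 VpAux4 in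
  have hpne : p ≠ 0 := by linarith
  have hp0 : (0:ℝ) ≤ p := by linarith
  have hTpos : 0 < T := by
    rw [← h0, ← hT]
    exact hmono (by rw [Fin.lt_def]; simp [Fin.last]; omega)
  -- index of the interval containing u
  set F : ℝ → Finset (Fin n) := fun u => Finset.univ.filter (fun i : Fin n => t i.castSucc ≤ u)
    with hF
  have hFne : ∀ u : ℝ, 0 ≤ u → (F u).Nonempty := by
    intro u hu
    refine ⟨⟨0, by omega⟩, ?_⟩
    simp only [hF, Finset.mem_filter, Finset.mem_univ, true_and]
    have h00 : ((⟨0, by omega⟩ : Fin n).castSucc) = (0 : Fin (n+1)) := by ext; simp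
    rw [h00, h0]; exact hu
  set idx : ℝ → Fin n := fun u => if h : (F u).Nonempty then (F u).max' h else ⟨0, by omega⟩
    with hidx
  have hidx_mem : ∀ u : ℝ, 0 ≤ u → t (idx u).castSucc ≤ u := by
    intro u hu
    have h := (F u).max'_mem (hFne u hu)
    simp only [hF, Finset.mem_filter, Finset.mem_univ, true_and] at h
    simpa only [hidx, dif_pos (hFne u hu)] using h
  have hidx_ge : ∀ u : ℝ, 0 ≤ u → ∀ i : Fin n, t i.castSucc ≤ u → i ≤ idx u := by
    intro u hu i hi
    simp only [hidx, dif_pos (hFne u hu)]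
    exact Finset.le_max' _ _ (by simp [hF, hi])
  have hidx_mono : ∀ u v : ℝ, 0 ≤ u → u ≤ v → idx u ≤ idx v :=
    fun u v hu huv => hidx_ge v (hu.trans huv) _ ((hidx_mem u hu).trans huv)
  have hidx_lt : ∀ u : ℝ, 0 ≤ u → u < T → u < t (idx u).succ := by
    intro u hu huT
    by_contra hcon
    push_neg at hcon
    rcases lt_or_ge ((idx u : ℕ) + 1) n with hlt | hge
    · have hle := hidx_ge u hu ⟨(idx u : ℕ) + 1, hlt⟩ (by
        have he : ((⟨(idx u : ℕ) + 1, hlt⟩ : Fin n).castSucc) = (idx u).succ := by ext; simp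
        rw [he]; exact hcon)
      rw [Fin.le_def] at hle
      simp only [] at hle
      omega
    · have he : (idx u).succ = Fin.last n := by
        ext
        simp only [Fin.val_succ, Fin.val_last]
        have := (idx u).isLt; omega
      rw [he, hT] at hcon; linarith
  have hidx_topmem : ∀ i : Fin n, t i.castSucc ≤ T := by
    intro i; rw [← hT]; exact hmono.monotone (Fin.le_last _)
  have hidxT : idx T = ⟨n - 1, by omega⟩ := by
    refine le_antisymm ?_ (hidx_ge T hTpos.le _ (hidx_topmem _))
    rw [Fin.le_def]
    have := (idx T).isLt
    simp only []
    omega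
  -- value of a step function at u
  have hval : ∀ (y : ℝ → ℝ),
      (∀ i : Fin n, ∀ s ∈ Ico (t i.castSucc) (t i.succ), y s = y (t i.castSucc)) →
      (y T = y (t ⟨n - 1, by omega⟩)) →
      ∀ u : ℝ, 0 ≤ u → u ≤ T → y u = y (t (idx u).castSucc) := by
    intro y hstep hlast u hu huT
    rcases lt_or_eq_of_le huT with hlt | heq
    · exact hstep (idx u) u ⟨hidx_mem u hu, hidx_lt u hu hlt⟩
    · subst heq
      rw [hlast, hidxT]
      congr 2
  -- running sup of a step function at u
  have hrs : ∀ (y : ℝ → ℝ),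
      (∀ i : Fin n, ∀ s ∈ Ico (t i.castSucc) (t i.succ), y s = y (t i.castSucc)) →
      (y T = y (t ⟨n - 1, by omega⟩)) →
      ∀ u : ℝ, 0 ≤ u → u ≤ T →
        runSup y u = VpAux.runMax (fun i : Fin n => y (t i.castSucc)) (idx u) := by
    intro y hstep hlast u hu huT
    have himage : y '' Icc 0 u = (fun i : Fin n => y (t i.castSucc)) '' Set.Iic (idx u) := by
      apply Set.Subset.antisymm
      · rintro _ ⟨s, hs, rfl⟩
        exact ⟨idx s, hidx_mono s u hs.1 hs.2, (hval y hstep hlast s hs.1 (hs.2.trans huT)).symm⟩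
      · rintro _ ⟨l, hl, rfl⟩
        refine ⟨t l.castSucc, ⟨?_, ?_⟩, rfl⟩
        · rw [← h0]; exact hmono.monotone (Fin.zero_le _)
        · exact le_trans (hmono.monotone (Fin.castSucc_le_castSucc_iff.2 hl)) (hidx_mem u hu)
    unfold runSup VpAux.runMax
    rw [himage, show Set.Iic (idx u) = ↑(Finset.Iic (idx u)) from (Finset.coe_Iic _).symm]
    exact (Finset.sup'_eq_csSup_image _ _ _).symm
  have hrs1 := hrs y1 hstep1 hlast1
  have hrs2 := hrs y2 hstep2 hlast2
  have hval1 := hval y1 hstep1 hlast1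
  have hval2 := hval y2 hstep2 hlast2
  -- facts about partitions
  have hpart : ∀ (m : ℕ) (s : Fin (m+1) → ℝ), Monotone s → s 0 = 0 → s (Fin.last m) = T →
      (∀ j : Fin (m+1), 0 ≤ s j ∧ s j ≤ T) ∧ Monotone (fun j : Fin (m+1) => idx (s j)) := by
    intro m s hsm hs0 hsl
    have hr : ∀ j : Fin (m+1), 0 ≤ s j ∧ s j ≤ T := fun j =>
      ⟨by rw [← hs0]; exact hsm (Fin.zero_le j), by rw [← hsl]; exact hsm (Fin.le_last j)⟩
    exact ⟨hr, fun i j hij => hidx_mono _ _ (hr i).1 (hsm hij)⟩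
  -- boundedness of the variation sums of y1 - y2
  have hne : (Finset.univ : Finset (Fin n)).Nonempty := ⟨⟨0, by omega⟩, Finset.mem_univ _⟩
  have hC0' : (0:ℝ) ≤ Finset.univ.sup' hne
      (fun i : Fin n => |y1 (t i.castSucc) - y2 (t i.castSucc)|) :=
    le_trans (abs_nonneg (y1 (t (⟨0, by omega⟩ : Fin n).castSucc) -
        y2 (t (⟨0, by omega⟩ : Fin n).castSucc)))
      (Finset.le_sup' (fun i : Fin n => |y1 (t i.castSucc) - y2 (t i.castSucc)|)
        (Finset.mem_univ (⟨0, by omega⟩ : Fin n)))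
  set C : ℝ := Finset.univ.sup' hne (fun i : Fin n => |y1 (t i.castSucc) - y2 (t i.castSucc)|)
    with hC
  have hC0 : (0:ℝ) ≤ C := hC0'
  have h2C : (0:ℝ) ≤ (2 * C) ^ p := Real.rpow_nonneg (by linarith) _
  have hBdd : BddAbove (varSums p (fun u => y1 u - y2 u) 0 T) := by
    refine ⟨(n : ℝ) * (2 * C) ^ p, ?_⟩
    rintro v ⟨m, s, hsm, hs0, hsl, rfl⟩
    obtain ⟨hr, hιm⟩ := hpart m s hsm hs0 hsl
    have hterm : ∀ j : Fin (m+1), y1 (s j) - y2 (s j) =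
        y1 (t (idx (s j)).castSucc) - y2 (t (idx (s j)).castSucc) := fun j => by
      rw [hval1 (s j) (hr j).1 (hr j).2, hval2 (s j) (hr j).1 (hr j).2]
    have step1 : (∑ i : Fin m, ‖(fun u => y1 u - y2 u) (s i.succ) -
        (fun u => y1 u - y2 u) (s i.castSucc)‖ ^ p) ≤
        ∑ i : Fin m, (if idx (s i.castSucc) = idx (s i.succ) then (0:ℝ) else (2 * C) ^ p) := by
      refine Finset.sum_le_sum fun i _ => ?_
      simp only [Real.norm_eq_abs]
      rw [hterm i.succ, hterm i.castSucc]
      by_cases h : idx (s i.castSucc) = idx (s i.succ)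
      · rw [if_pos h, h, sub_self, abs_zero, Real.zero_rpow hpne]
      · rw [if_neg h]
        apply Real.rpow_le_rpow (abs_nonneg _) _ hp0
        have h1 : |y1 (t (idx (s i.succ)).castSucc) - y2 (t (idx (s i.succ)).castSucc)| ≤ C := by
          rw [hC]
          exact Finset.le_sup' (fun i : Fin n => |y1 (t i.castSucc) - y2 (t i.castSucc)|)
            (Finset.mem_univ _)
        have h2 : |y1 (t (idx (s i.castSucc)).castSucc) -
            y2 (t (idx (s i.castSucc)).castSucc)| ≤ C := by
          rw [hC]
          exact Finset.le_sup' (fun i : Fin n => |y1 (t i.castSucc) - y2 (t i.castSucc)|)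
            (Finset.mem_univ _)
        rw [abs_sub_le_iff]
        rcases abs_le.1 h1 with ⟨h1a, h1b⟩
        rcases abs_le.1 h2 with ⟨h2a, h2b⟩
        constructor <;> linarith
    refine le_trans step1 ?_
    rw [Finset.sum_ite, Finset.sum_const, Finset.sum_const, smul_zero, zero_add]
    have hcard : (Finset.univ.filter
        (fun i : Fin m => ¬ idx (s i.castSucc) = idx (s i.succ))).card ≤ n := by
      have hinj : Set.InjOn (fun j : Fin m => idx (s j.succ))
          ↑(Finset.univ.filter (fun i : Fin m => ¬ idx (s i.castSucc) = idx (s i.succ))) := by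
        intro j hj j' hj' heq
        by_contra hne'
        simp only [Finset.coe_filter, Set.mem_setOf_eq, Finset.mem_univ, true_and] at hj hj'
        have heq' : idx (s j.succ) = idx (s j'.succ) := heq
        rcases lt_or_gt_of_ne hne' with hlt | hlt
        · have hv := Fin.lt_def.mp hlt
          have h1 : idx (s j.succ) ≤ idx (s j'.castSucc) := hιm (by
            rw [Fin.le_def, Fin.val_succ, Fin.coe_castSucc]; omega)
          rw [heq'] at h1
          exact hj' (le_antisymm (hιm (Fin.castSucc_le_succ j')) h1)
        · have hv := Fin.lt_def.mp hlt
          have h1 : idx (s j'.succ) ≤ idx (s j.castSucc) := hιm (by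
            rw [Fin.le_def, Fin.val_succ, Fin.coe_castSucc]; omega)
          rw [← heq'] at h1
          exact hj (le_antisymm (hιm (Fin.castSucc_le_succ j)) h1)
      have := Finset.card_le_card_of_injOn (fun j : Fin m => idx (s j.succ))
        (fun j _ => Finset.mem_univ _) hinj
      simpa using this
    rw [nsmul_eq_mul]
    exact mul_le_mul_of_nonneg_right (by exact_mod_cast hcard) h2C
  -- positivity of the RHS sup
  have h0lex : (0:ℝ) ≤ sSup (varSums p (fun u => y1 u - y2 u) 0 T) := by
    have hmem := mem_varSums_of_list (p := p) (fun u => y1 u - y2 u) 0 T []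
      (List.isChain_pair.2 hTpos.le)
    exact le_trans (psum_nonneg (p := p) (fun u => y1 u - y2 u) _) (le_csSup hBdd hmem)
  -- main estimate
  unfold vpvar
  apply Real.sSup_le _ h0lex
  rintro v ⟨m, s, hsm, hs0, hsl, rfl⟩
  obtain ⟨hr, hιm⟩ := hpart m s hsm hs0 hsl
  have hMterm : ∀ j : Fin (m+1), runSup y1 (s j) - runSup y2 (s j) =
      VpAux.runMax (fun i : Fin n => y1 (t i.castSucc)) (idx (s j)) -
      VpAux.runMax (fun i : Fin n => y2 (t i.castSucc)) (idx (s j)) := fun j => by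
    rw [hrs1 (s j) (hr j).1 (hr j).2, hrs2 (s j) (hr j).1 (hr j).2]
  have hveq : (∑ i : Fin m, ‖(fun u => runSup y1 u - runSup y2 u) (s i.succ) -
      (fun u => runSup y1 u - runSup y2 u) (s i.castSucc)‖ ^ p) =
      psum p (fun i : Fin n => VpAux.runMax (fun i : Fin n => y1 (t i.castSucc)) i -
        VpAux.runMax (fun i : Fin n => y2 (t i.castSucc)) i)
        (List.ofFn (fun j : Fin (m+1) => idx (s j))) := by
    rw [psum_ofFn]
    refine Finset.sum_congr rfl fun i _ => ?_
    simp only [Real.norm_eq_abs]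
    rw [hMterm i.succ, hMterm i.castSucc]
  refine le_trans (le_of_eq hveq) ?_
  obtain ⟨K, hKc, hKle⟩ := disc hp (fun i : Fin n => y1 (t i.castSucc))
    (fun i : Fin n => y2 (t i.castSucc)) (List.ofFn (fun j : Fin (m+1) => idx (s j)))
    (chain'_ofFn _ hιm)
  refine le_trans hKle ?_
  -- realize K as a partition of [0, T]
  have hmapeq : psum p (fun u => y1 u - y2 u) (K.map (fun k : Fin n => t k.castSucc)) =
      psum p (fun i : Fin n => y1 (t i.castSucc) - y2 (t i.castSucc)) K :=
    psum_map _ _ _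
  have hmemLg : ∀ z ∈ K.map (fun k : Fin n => t k.castSucc), 0 ≤ z ∧ z ≤ T := by
    intro z hz
    rw [List.mem_map] at hz
    obtain ⟨k, _, rfl⟩ := hz
    exact ⟨by rw [← h0]; exact hmono.monotone (Fin.zero_le _), hidx_topmem k⟩
  have hchainLg : (K.map (fun k : Fin n => t k.castSucc)).Chain' (· ≤ ·) :=
    (List.isChain_map _).2 (hKc.imp fun a b hab =>
      hmono.monotone (Fin.castSucc_le_castSucc_iff.2 hab))
  have hchain0 : ((0:ℝ) :: K.map (fun k : Fin n => t k.castSucc)).Chain' (· ≤ ·) :=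
    List.isChain_cons.2 ⟨fun h hh => (hmemLg h (List.mem_of_mem_head? hh)).1, hchainLg⟩
  have hchainfull :
      ((0:ℝ) :: (K.map (fun k : Fin n => t k.castSucc) ++ [T])).Chain' (· ≤ ·) := by
    rw [show (0:ℝ) :: (K.map (fun k : Fin n => t k.castSucc) ++ [T]) =
        ((0:ℝ) :: K.map (fun k : Fin n => t k.castSucc)) ++ [T] by simp]
    refine List.IsChain.append hchain0 (List.isChain_singleton T) ?_
    intro xx hx yy hy
    have hyT : yy = T := by have h' := hy; simp only [List.head?_cons, Option.mem_def, Option.some.injEq] at h'; exact h'.symm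
    subst hyT
    have hx' := List.mem_of_mem_getLast? hx
    rcases List.mem_cons.1 hx' with h | h
    · subst h; exact hTpos.le
    · exact (hmemLg _ h).2
  have hmem := mem_varSums_of_list (p := p) (fun u => y1 u - y2 u) 0 T
    (K.map (fun k : Fin n => t k.castSucc)) hchainfull
  refine le_trans ?_ (le_csSup hBdd hmem)
  calc psum p (fun i : Fin n => y1 (t i.castSucc) - y2 (t i.castSucc)) K
      = psum p (fun u => y1 u - y2 u) (K.map (fun k : Fin n => t k.castSucc)) := hmapeq.symm
    _ ≤ psum p (fun u => y1 u - y2 u) (K.map (fun k : Fin n => t k.castSucc) ++ [T]) :=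
        psum_le_concat _ _ _
    _ ≤ psum p (fun u => y1 u - y2 u)
          ((0:ℝ) :: (K.map (fun k : Fin n => t k.castSucc) ++ [T])) := psum_le_cons _ _ _
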